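/- Let R be a commutative ring in which 2 is invertible and let n ≥ 1. There exist polynomials b_1, …, b_n in the polynomial ring R[a_1, …, a_n] such that: (i) each b_i is weighted homogeneous of degree i for the grading in which the variable a_j has weight j; (ii) each b_i − (1/2)·a_i is a polynomial in the variables a_1, …, a_{i−1} only; (iii) the n×n matrix M over R[a_1,…,a_n] whose first row is (−b_1, −b_2, …, −b_{n−1}, −2b_n), whose subdiagonal entries M_{i+1,i} (1 ≤ i ≤ n−1) all equal 1, whose last-column entries below the first row are M_{i,n} = −b_{n+1−i} for 2 ≤ i ≤ n, and whose remaining entries are 0, has characteristic polynomial det(X·1 − M) = X^n + a_1 X^{n−1} + ⋯ + a_n. -/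

import Mathlib

open MvPolynomial

section KostantGeneric
variable {T : Type*} [CommRing T]

noncomputable def qp (c : ℕ → T) (m : ℕ) : Polynomial T :=
  Polynomial.X ^ m + ∑ j ∈ Finset.range m, Polynomial.C (c (j+1)) * Polynomial.X ^ (m-1-j)

lemma qp_zero (c : ℕ → T) : qp c 0 = 1 := by simp [qp]

lemma qp_succ (c : ℕ → T) (m : ℕ) :
    qp c (m+1) = Polynomial.X * qp c m + Polynomial.C (c (m+1)) := by
  rw [qp, qp, Finset.sum_range_succ, mul_add, Finset.mul_sum]
  have h1 : (Polynomial.X : Polynomial T) * Polynomial.X ^ m = Polynomial.X ^ (m+1) := by ring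
  have h2 : ∀ j ∈ Finset.range m,
      Polynomial.X * (Polynomial.C (c (j+1)) * Polynomial.X ^ (m-1-j))
        = Polynomial.C (c (j+1)) * Polynomial.X ^ (m+1-1-j) := by
    intro j hj
    have : m+1-1-j = (m-1-j)+1 := by have := Finset.mem_range.mp hj; omega
    rw [this, pow_succ]; ring
  rw [Finset.sum_congr rfl h2, h1]
  have h3 : m+1-1-m = 0 := by omega
  rw [h3]; ring

noncomputable def bent (c : ℕ → T) (M i j : ℕ) : Polynomial T :=
  (if i = j then Polynomial.X else 0) + (if j+1 = i then -1 else 0) +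
  (if j = M-1 then Polynomial.C (c (M-i)) else 0)

lemma bent_succ (c : ℕ → T) {M : ℕ} (hM : 1 ≤ M) (i j : ℕ) :
    bent c (M+1) (i+1) (j+1) = bent c M i j := by
  unfold bent
  have h : M+1-(i+1) = M-i := by omega
  rw [h]
  split_ifs <;> first | rfl | (exfalso; omega)

lemma bent_00 (c : ℕ → T) (M : ℕ) (hM : 1 ≤ M) : bent c (M+1) 0 0 = Polynomial.X := by
  unfold bent
  rw [if_pos rfl, if_neg (by omega), if_neg (by omega)]
  ring

lemma bent_10 (c : ℕ → T) (M : ℕ) : bent c (M+2) 1 0 = -1 := by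
  unfold bent
  rw [if_neg (by omega), if_pos rfl, if_neg (by omega)]
  ring

lemma bent_i20 (c : ℕ → T) (M i : ℕ) : bent c (M+2) (i+2) 0 = 0 := by
  unfold bent
  rw [if_neg (by omega), if_neg (by omega), if_neg (by omega)]
  ring

lemma bent_0succ (c : ℕ → T) (M j : ℕ) :
    bent c (M+2) 0 (j+1) = if j = M then Polynomial.C (c (M+2)) else 0 := by
  unfold bent
  rw [if_neg (by omega), if_neg (by omega)]
  by_cases hj : j = M
  · rw [if_pos (by omega), if_pos hj, Nat.sub_zero]
    ring
  · rw [if_neg (by omega), if_neg hj]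
    ring

lemma succAbove_one_val {m : ℕ} (k : Fin (m+1)) :
    (((1 : Fin (m+2)).succAbove k) : ℕ) = if (k:ℕ) = 0 then 0 else (k:ℕ)+1 := by
  unfold Fin.succAbove
  split_ifs <;> simp_all [Fin.lt_def, Fin.val_one, Fin.coe_castSucc, Fin.val_succ]

lemma detE (c : ℕ → T) (t : Polynomial T) (m : ℕ) :
    (Matrix.of fun i j : Fin (m+1) =>
      if (i:ℕ) = 0 then (if (j:ℕ) = m then t else 0) else bent c (m+1) i j).det = t := by
  rw [Matrix.det_succ_row_zero]
  rw [Finset.sum_eq_single (Fin.last m)]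
  · have hlast : ((Fin.last m : Fin (m+1)):ℕ) = m := rfl
    have hA : (Matrix.of fun i j : Fin (m+1) =>
        if (i:ℕ) = 0 then (if (j:ℕ) = m then t else 0) else bent c (m+1) i j) 0 (Fin.last m) = t := by
      simp
    rw [hA]
    have hsub : ((Matrix.of fun i j : Fin (m+1) =>
        if (i:ℕ) = 0 then (if (j:ℕ) = m then t else 0) else bent c (m+1) i j).submatrix
          Fin.succ (Fin.last m).succAbove) =
        Matrix.of (fun i j : Fin m => bent c (m+1) ((i:ℕ)+1) (j:ℕ)) := by
      ext i j
      rw [Fin.succAbove_last]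
      simp [Matrix.submatrix_apply]
    rw [hsub]
    have htri : (Matrix.of (fun i j : Fin m => bent c (m+1) ((i:ℕ)+1) (j:ℕ))).det
        = (-1:Polynomial T)^m := by
      rw [Matrix.det_of_upperTriangular]
      · simp only [Matrix.of_apply]
        have hdiag : ∀ i : Fin m, bent c (m+1) ((i:ℕ)+1) (i:ℕ) = -1 := by
          intro i
          unfold bent
          have h2 : ¬((i:ℕ) = (m+1)-1) := by have := i.isLt; omega
          rw [if_neg (by omega), if_pos rfl, if_neg h2]
          ring
        rw [Finset.prod_congr rfl (fun i _ => hdiag i)]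
        simp
      · intro i j hij
        simp only [id] at hij
        have hij' : (j:ℕ) < (i:ℕ) := hij
        simp only [Matrix.of_apply]
        unfold bent
        have h3 : ¬((j:ℕ) = (m+1)-1) := by have := j.isLt; omega
        rw [if_neg (by omega), if_neg (by omega), if_neg h3]
        ring
    rw [htri]
    have hsq : ((-1:Polynomial T) ^ (m:ℕ)) * ((-1:Polynomial T)^m) = 1 := by
      rw [← pow_add]
      exact Even.neg_one_pow ⟨m, by ring⟩
    calc (-1:Polynomial T) ^ ((Fin.last m : Fin (m+1)):ℕ) * t * (-1)^m
        = t * ((-1:Polynomial T)^m * (-1)^m) := by rw [hlast]; ring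
      _ = t := by rw [hsq, mul_one]
  · intro j _ hj
    have : ¬((j:ℕ) = m) := fun h => hj (Fin.ext h)
    simp [this]
  · simp

lemma detB (c : ℕ → T) : ∀ m : ℕ,
    (Matrix.of fun i j : Fin (m+1) => bent c (m+1) (i:ℕ) (j:ℕ)).det = qp c (m+1) := by
  intro m
  induction m with
  | zero =>
    rw [Matrix.det_fin_one]
    have h1 : (Matrix.of fun i j : Fin 1 => bent c 1 (i:ℕ) (j:ℕ)) 0 0 = bent c 1 0 0 := rfl
    rw [h1]
    unfold bent
    rw [if_pos rfl, if_neg (by omega), if_pos rfl, qp_succ, qp_zero]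
    ring
  | succ m ih =>
    show (Matrix.of fun i j : Fin (m+2) => bent c (m+2) (i:ℕ) (j:ℕ)).det = qp c (m+2)
    set A := Matrix.of fun i j : Fin (m+2) => bent c (m+2) (i:ℕ) (j:ℕ) with hAdef
    rw [Matrix.det_succ_column_zero, Fin.sum_univ_succ, Fin.sum_univ_succ]
    simp only [Fin.succ_zero_eq_one]
    have hz : ∑ i : Fin m, (-1:Polynomial T) ^ (((i.succ.succ) : Fin (m+2)):ℕ) *
        A i.succ.succ 0 * (A.submatrix i.succ.succ.succAbove Fin.succ).det = 0 := by
      apply Finset.sum_eq_zero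
      intro i _
      have htail : A i.succ.succ 0 = 0 := by
        simp only [hAdef, Matrix.of_apply, Fin.val_succ, Fin.val_zero]
        exact bent_i20 c m (i:ℕ)
      rw [htail]; ring
    rw [hz]
    have hA00 : A 0 0 = Polynomial.X := by
      simp only [hAdef, Matrix.of_apply, Fin.val_zero]
      exact bent_00 c (m+1) (by omega)
    have hA10 : A 1 0 = -1 := by
      simp only [hAdef, Matrix.of_apply, Fin.val_zero, Fin.val_one]
      exact bent_10 c m
    have hm0 : A.submatrix (0 : Fin (m+2)).succAbove Fin.succ =
        Matrix.of fun i j : Fin (m+1) => bent c (m+1) (i:ℕ) (j:ℕ) := by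
      refine Matrix.ext fun i j => ?_
      rw [Fin.succAbove_zero]
      simp only [hAdef, Matrix.submatrix_apply, Matrix.of_apply, Fin.val_succ]
      exact bent_succ c (by omega) i j
    have hm1 : A.submatrix (1 : Fin (m+2)).succAbove Fin.succ =
        Matrix.of (fun i j : Fin (m+1) =>
          if (i:ℕ) = 0 then (if (j:ℕ) = m then Polynomial.C (c (m+2)) else 0)
          else bent c (m+1) (i:ℕ) (j:ℕ)) := by
      refine Matrix.ext fun i j => ?_
      simp only [hAdef, Matrix.submatrix_apply, Matrix.of_apply, Fin.val_succ]
      rw [succAbove_one_val i]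
      by_cases h : (i:ℕ) = 0
      · rw [if_pos h, if_pos h]
        exact bent_0succ c m (j:ℕ)
      · rw [if_neg h, if_neg h]
        exact bent_succ c (by omega) i j
    rw [hm0, hm1, ih, hA00, hA10, detE]
    have hq : qp c (m+2) = Polynomial.X * qp c (m+1) + Polynomial.C (c (m+2)) := qp_succ c (m+1)
    rw [hq]
    simp only [Fin.val_zero, Fin.val_one, pow_zero, pow_one]
    ring

lemma detG (c : ℕ → T) : ∀ m : ℕ, ∀ s : ℕ,
    (Matrix.of fun i j : Fin (m+1) =>
      if (i:ℕ) = 0 then Polynomial.C (c (s+(j:ℕ)+1)) else bent c (m+1) (i:ℕ) (j:ℕ)).det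
      = ∑ k ∈ Finset.range (m+1), Polynomial.C (c (s+k+1)) * qp c (m-k) := by
  intro m
  induction m with
  | zero =>
    intro s
    rw [Matrix.det_fin_one]
    simp [qp_zero]
  | succ m ih =>
    intro s
    set A := Matrix.of fun i j : Fin (m+2) =>
      if (i:ℕ) = 0 then Polynomial.C (c (s+(j:ℕ)+1)) else bent c (m+2) (i:ℕ) (j:ℕ) with hAdef
    show A.det = _
    rw [Matrix.det_succ_column_zero, Fin.sum_univ_succ, Fin.sum_univ_succ]
    simp only [Fin.succ_zero_eq_one]
    have hz : ∑ i : Fin m, (-1:Polynomial T) ^ (((i.succ.succ) : Fin (m+2)):ℕ) *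
        A i.succ.succ 0 * (A.submatrix i.succ.succ.succAbove Fin.succ).det = 0 := by
      apply Finset.sum_eq_zero
      intro i _
      have htail : A i.succ.succ 0 = 0 := by
        simp only [hAdef, Matrix.of_apply, Fin.val_succ, Fin.val_zero]
        rw [if_neg (by omega)]
        exact bent_i20 c m (i:ℕ)
      rw [htail]; ring
    rw [hz]
    have hA00 : A 0 0 = Polynomial.C (c (s+1)) := by
      simp [hAdef]
    have hA10 : A 1 0 = -1 := by
      simp only [hAdef, Matrix.of_apply, Fin.val_zero, Fin.val_one]
      simp only [one_ne_zero, ↓reduceIte]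
      exact bent_10 c m
    have hm0 : A.submatrix (0 : Fin (m+2)).succAbove Fin.succ =
        Matrix.of fun i j : Fin (m+1) => bent c (m+1) (i:ℕ) (j:ℕ) := by
      refine Matrix.ext fun i j => ?_
      rw [Fin.succAbove_zero]
      simp only [hAdef, Matrix.submatrix_apply, Matrix.of_apply, Fin.val_succ]
      rw [if_neg (by omega)]
      exact bent_succ c (by omega) i j
    have hm1 : A.submatrix (1 : Fin (m+2)).succAbove Fin.succ =
        Matrix.of (fun i j : Fin (m+1) =>
          if (i:ℕ) = 0 then Polynomial.C (c ((s+1)+(j:ℕ)+1)) else bent c (m+1) (i:ℕ) (j:ℕ)) := by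
      refine Matrix.ext fun i j => ?_
      simp only [hAdef, Matrix.submatrix_apply, Matrix.of_apply, Fin.val_succ]
      rw [succAbove_one_val i]
      by_cases h : (i:ℕ) = 0
      · rw [if_pos h, if_pos h, if_pos rfl,
          show s+((j:ℕ)+1)+1 = (s+1)+(j:ℕ)+1 from by omega]
      · rw [if_neg h, if_neg (show ¬((i:ℕ)+1 = 0) by omega), if_neg h]
        exact bent_succ c (by omega) i j
    rw [hm0, hm1, ih (s+1), detB, hA00, hA10]
    simp only [Fin.val_zero, Fin.val_one, pow_zero, pow_one]
    rw [Finset.sum_range_succ' (fun k => Polynomial.C (c (s+k+1)) * qp c (m+1-k)) (m+1)]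
    simp only [Nat.sub_zero, Nat.add_zero]
    have hcong : ∀ k ∈ Finset.range (m+1),
        Polynomial.C (c (s+(k+1)+1)) * qp c (m+1-(k+1))
          = Polynomial.C (c ((s+1)+k+1)) * qp c (m-k) := by
      intro k hk
      have e1 : s+(k+1)+1 = (s+1)+k+1 := by omega
      have e2 : m+1-(k+1) = m-k := by omega
      rw [e1, e2]
    rw [Finset.sum_congr rfl hcong]
    ring

lemma detA (c : ℕ → T) (m : ℕ) :
    (Matrix.of fun i j : Fin (m+1) => bent c (m+1) (i:ℕ) (j:ℕ) +
      (if (i:ℕ) = 0 then Polynomial.C (c ((j:ℕ)+1)) else 0)).det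
    = qp c (m+1) + ∑ k ∈ Finset.range (m+1), Polynomial.C (c (k+1)) * qp c (m-k) := by
  set B := Matrix.of fun i j : Fin (m+1) => bent c (m+1) (i:ℕ) (j:ℕ) with hB
  have hA : (Matrix.of fun i j : Fin (m+1) => bent c (m+1) (i:ℕ) (j:ℕ) +
      (if (i:ℕ) = 0 then Polynomial.C (c ((j:ℕ)+1)) else 0))
      = B.updateRow 0 (B 0 + fun j : Fin (m+1) => Polynomial.C (c ((j:ℕ)+1))) := by
    refine Matrix.ext fun i j => ?_
    rw [Matrix.updateRow_apply]
    by_cases h : i = 0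
    · subst h
      rw [if_pos rfl, Pi.add_apply]
      simp [hB]
    · have h' : ¬((i:ℕ) = 0) := fun hh => h (Fin.ext hh)
      rw [if_neg h, Matrix.of_apply, if_neg h', add_zero]
      rfl
  rw [hA, Matrix.det_updateRow_add, Matrix.updateRow_eq_self]
  have hG : B.updateRow 0 (fun j => Polynomial.C (c ((j:ℕ)+1)))
      = Matrix.of (fun i j : Fin (m+1) =>
        if (i:ℕ) = 0 then Polynomial.C (c (0+(j:ℕ)+1)) else bent c (m+1) (i:ℕ) (j:ℕ)) := by
    refine Matrix.ext fun i j => ?_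
    rw [Matrix.updateRow_apply]
    by_cases h : i = 0
    · subst h
      rw [if_pos rfl, Matrix.of_apply]
      simp
    · have h' : ¬((i:ℕ) = 0) := fun hh => h (Fin.ext hh)
      rw [if_neg h, Matrix.of_apply, if_neg h']
      rfl
  rw [hG, detG c m 0, detB]
  congr 1
  refine Finset.sum_congr rfl fun k hk => ?_
  rw [Nat.zero_add]

noncomputable def esq (d : ℕ → T) (j : ℕ) : T :=
  2 * d (j+1) + ∑ k ∈ Finset.range j, d (k+1) * d (j-k)

lemma keySum (d : ℕ → T) : ∀ n : ℕ,
    qp d n + ∑ k ∈ Finset.range n, Polynomial.C (d (k+1)) * qp d (n-1-k)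
    = Polynomial.X ^ n + ∑ j ∈ Finset.range n, Polynomial.C (esq d j) * Polynomial.X ^ (n-1-j) := by
  intro n
  induction n with
  | zero => simp [qp]
  | succ n ih =>
    have hL1 : ∑ k ∈ Finset.range (n+1), Polynomial.C (d (k+1)) * qp d (n+1-1-k)
        = ∑ k ∈ Finset.range n, Polynomial.C (d (k+1)) * qp d (n-k) + Polynomial.C (d (n+1)) := by
      rw [Finset.sum_range_succ,
        Finset.sum_congr rfl (fun k (hk : k ∈ Finset.range n) => by
          rw [show n+1-1-k = n-k from by omega] :
          ∀ k ∈ Finset.range n, Polynomial.C (d (k+1)) * qp d (n+1-1-k)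
            = Polynomial.C (d (k+1)) * qp d (n-k)),
        show n+1-1-n = 0 from by omega, qp_zero, mul_one]
    have hL2 : ∀ k ∈ Finset.range n, Polynomial.C (d (k+1)) * qp d (n-k)
        = Polynomial.X * (Polynomial.C (d (k+1)) * qp d (n-1-k))
          + Polynomial.C (d (k+1) * d (n-k)) := by
      intro k hk
      have hk' := Finset.mem_range.mp hk
      have hnk : n-k = (n-1-k)+1 := by omega
      rw [map_mul]
      nth_rewrite 1 [hnk]
      rw [qp_succ, ← hnk]
      ring
    rw [hL1, Finset.sum_congr rfl hL2, Finset.sum_add_distrib, ← Finset.mul_sum, qp_succ d n]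
    have hesq : Polynomial.C (esq d n) = Polynomial.C (d (n+1)) + Polynomial.C (d (n+1))
        + ∑ k ∈ Finset.range n, Polynomial.C (d (k+1) * d (n-k)) := by
      rw [esq, map_add, map_mul, map_ofNat, map_sum]
      ring
    have hRHS : ∀ j ∈ Finset.range n,
        Polynomial.C (esq d j) * Polynomial.X ^ (n+1-1-j)
          = Polynomial.X * (Polynomial.C (esq d j) * Polynomial.X ^ (n-1-j)) := by
      intro j hj
      rw [show n+1-1-j = (n-1-j)+1 from by (have := Finset.mem_range.mp hj; omega), pow_succ]
      ring
    rw [Finset.sum_range_succ, Finset.sum_congr rfl hRHS, ← Finset.mul_sum,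
      show n+1-1-n = 0 from by omega, pow_zero, mul_one]
    linear_combination (Polynomial.X : Polynomial T) * ih - hesq

lemma entry_eq (d : ℕ → T) (m i j : ℕ) (hi : i ≤ m) (hj : j ≤ m) :
    (if i = j then (Polynomial.X : Polynomial T) else 0) -
      Polynomial.C (if i = 0 then (if j = m then -(2 * d (j+1)) else -(d (j+1)))
        else if j+1 = i then 1 else if j = m then -(d (m+1-i)) else 0)
    = bent d (m+1) i j + (if i = 0 then Polynomial.C (d (j+1)) else 0) := by
  unfold bent
  simp only [Nat.add_sub_cancel]
  by_cases h0 : i = 0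
  · subst h0
    rw [if_pos rfl, if_pos rfl, if_neg (show ¬(j+1 = 0) by omega)]
    by_cases hjm : j = m
    · subst hjm
      rw [if_pos rfl, if_pos rfl, Nat.sub_zero]
      rw [map_neg, map_mul, map_ofNat]
      ring
    · rw [if_neg hjm, if_neg hjm, map_neg]
      ring
  · rw [if_neg h0, if_neg h0, add_zero]
    by_cases hji : j+1 = i
    · rw [if_pos hji, if_pos hji, if_neg (show ¬(i = j) by omega),
        if_neg (show ¬(j = m) by omega)]
      simp
    · rw [if_neg hji, if_neg hji]
      by_cases hjm : j = m
      · rw [if_pos hjm, if_pos hjm, map_neg]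
        ring
      · rw [if_neg hjm, if_neg hjm, map_zero]
        ring

end KostantGeneric

noncomputable def dd (R : Type*) [CommRing R] [Invertible (2:R)] (n : ℕ) :
    ℕ → MvPolynomial (Fin n) R
  | m =>
    if h : 1 ≤ m ∧ m ≤ n then
      MvPolynomial.C ⅟2 * (MvPolynomial.X (⟨m-1, by omega⟩ : Fin n) -
        ∑ i ∈ (Finset.Ico 1 m).attach, dd R n i.1 * dd R n (m - i.1))
    else 0
  decreasing_by
  · have := Finset.mem_Ico.mp i.2; omega
  · have := Finset.mem_Ico.mp i.2; omega

section DD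
variable {R : Type*} [CommRing R] [Invertible (2:R)] {n : ℕ}

lemma dd_hom (m : ℕ) :
    (dd R n m).IsWeightedHomogeneous (fun j : Fin n => (j : ℕ) + 1) m := by
  induction m using Nat.strong_induction_on with
  | _ m ih =>
    rw [dd]
    split_ifs with h
    · have hX : (MvPolynomial.X (⟨m-1, by omega⟩ : Fin n) :
          MvPolynomial (Fin n) R).IsWeightedHomogeneous
          (fun j : Fin n => (j : ℕ) + 1) m := by
        have := isWeightedHomogeneous_X R (fun j : Fin n => (j : ℕ) + 1) (⟨m-1, by omega⟩ : Fin n)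
        convert this using 1
        simp only []
        omega
      have hsum : ((∑ i ∈ (Finset.Ico 1 m).attach,
          dd R n i.1 * dd R n (m - i.1))).IsWeightedHomogeneous
          (fun j : Fin n => (j : ℕ) + 1) m := by
        rw [← mem_weightedHomogeneousSubmodule]
        apply Submodule.sum_mem
        intro i _
        have hm := Finset.mem_Ico.mp i.2
        rw [mem_weightedHomogeneousSubmodule]
        have h1 := ih i.1 (by omega)
        have h2 := ih (m - i.1) (by omega)
        have := h1.mul h2
        convert this using 1
        omega
      have hsub : ((MvPolynomial.X (⟨m-1, by omega⟩ : Fin n) : MvPolynomial (Fin n) R) -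
          ∑ i ∈ (Finset.Ico 1 m).attach, dd R n i.1 * dd R n (m - i.1)).IsWeightedHomogeneous
          (fun j : Fin n => (j : ℕ) + 1) m := by
        rw [← mem_weightedHomogeneousSubmodule] at hX hsum ⊢
        exact Submodule.sub_mem _ hX hsum
      have := (isWeightedHomogeneous_C (fun j : Fin n => (j : ℕ) + 1) (⅟2 : R)).mul hsub
      rwa [zero_add] at this
    · exact isWeightedHomogeneous_zero R _ _

lemma dd_supp (m : ℕ) :
    dd R n m ∈ MvPolynomial.supported R {j : Fin n | (j : ℕ) < m} := by
  induction m using Nat.strong_induction_on with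
  | _ m ih =>
    rw [dd]
    split_ifs with h
    · apply Subalgebra.mul_mem
      · exact Subalgebra.algebraMap_mem _ _
      · apply Subalgebra.sub_mem
        · show _ ∈ Algebra.adjoin R (MvPolynomial.X '' {j : Fin n | (j : ℕ) < m})
          exact Algebra.subset_adjoin ⟨⟨m-1, by omega⟩, by simp only [Set.mem_setOf_eq]; omega, rfl⟩
        · apply Subalgebra.sum_mem
          intro i _
          have hm := Finset.mem_Ico.mp i.2
          apply Subalgebra.mul_mem
          · exact MvPolynomial.supported_mono (fun j hj => by
              simp only [Set.mem_setOf_eq] at *; omega) (ih i.1 (by omega))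
          · exact MvPolynomial.supported_mono (fun j hj => by
              simp only [Set.mem_setOf_eq] at *; omega) (ih (m - i.1) (by omega))
    · exact Subalgebra.zero_mem _

end DD

/-- §2.3: the explicit Kostant section.  Over a ring in which 2 is invertible there are
polynomials `b_1, …, b_n` (`b i` corresponding to `b_{i+1}`), weighted homogeneous of
degree `i` for the weights `w(a_j) = j`, with `b_i − a_i/2` a polynomial in
`a_1, …, a_{i−1}` only, such that the displayed companion-type matrix has characteristic
polynomial `X^n + a_1 X^{n−1} + ⋯ + a_n`. -/
theorem stmt_3 (R : Type*) [CommRing R] [Invertible (2 : R)] (n : ℕ) (hn : 1 ≤ n) :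
    ∃ b : Fin n → MvPolynomial (Fin n) R,
      (∀ i : Fin n,
        (b i).IsWeightedHomogeneous (fun j : Fin n => (j : ℕ) + 1) ((i : ℕ) + 1)) ∧
      (∀ i : Fin n,
        b i - C (⅟(2 : R)) * X i ∈ MvPolynomial.supported R {j : Fin n | j < i}) ∧
      Matrix.charpoly (Matrix.of fun i j : Fin n =>
          if (i : ℕ) = 0 then (if (j : ℕ) = n - 1 then -(2 * b j) else -(b j))
          else if (j : ℕ) + 1 = (i : ℕ) then 1
          else if (j : ℕ) = n - 1 then -(b i.rev)
          else 0) =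
        Polynomial.X ^ n +
          ∑ i : Fin n, Polynomial.C (X i) * Polynomial.X ^ (n - 1 - (i : ℕ)) := by
  obtain ⟨m, rfl⟩ : ∃ m, n = m+1 := ⟨n-1, by omega⟩
  refine ⟨fun i => dd R (m+1) ((i:ℕ)+1), fun i => dd_hom _, fun i => ?_, ?_⟩
  · -- supported condition
    show dd R (m+1) ((i:ℕ)+1) - MvPolynomial.C (⅟(2:R)) * MvPolynomial.X i ∈
      MvPolynomial.supported R {j : Fin (m+1) | j < i}
    rw [dd, dif_pos (⟨by omega, by omega⟩ : 1 ≤ (i:ℕ)+1 ∧ (i:ℕ)+1 ≤ m+1)]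
    simp only [Nat.add_sub_cancel, Fin.eta]
    have hring : MvPolynomial.C (⅟(2:R)) * (MvPolynomial.X i -
          ∑ k ∈ (Finset.Ico 1 ((i:ℕ)+1)).attach,
            dd R (m+1) k.1 * dd R (m+1) ((i:ℕ)+1 - k.1))
        - MvPolynomial.C (⅟(2:R)) * MvPolynomial.X i
        = -(MvPolynomial.C (⅟(2:R)) *
            ∑ k ∈ (Finset.Ico 1 ((i:ℕ)+1)).attach,
              dd R (m+1) k.1 * dd R (m+1) ((i:ℕ)+1 - k.1)) := by
      ring
    rw [hring]
    apply Subalgebra.neg_mem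
    apply Subalgebra.mul_mem
    · exact Subalgebra.algebraMap_mem _ _
    · apply Subalgebra.sum_mem
      intro k _
      have hk := Finset.mem_Ico.mp k.2
      apply Subalgebra.mul_mem
      · refine MvPolynomial.supported_mono (s := {j : Fin (m+1) | (j:ℕ) < k.1})
          (fun j hj => ?_) (dd_supp k.1)
        simp only [Set.mem_setOf_eq] at *
        exact Fin.lt_def.mpr (by omega)
      · refine MvPolynomial.supported_mono (s := {j : Fin (m+1) | (j:ℕ) < (i:ℕ)+1 - k.1})
          (fun j hj => ?_) (dd_supp ((i:ℕ)+1 - k.1))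
        simp only [Set.mem_setOf_eq] at *
        exact Fin.lt_def.mpr (by omega)
  · -- charpoly
    show (Matrix.charmatrix _).det = _
    have hmat : Matrix.charmatrix (Matrix.of fun i j : Fin (m+1) =>
          if (i : ℕ) = 0 then
            (if (j : ℕ) = m+1 - 1 then -(2 * dd R (m+1) ((j:ℕ)+1)) else -(dd R (m+1) ((j:ℕ)+1)))
          else if (j : ℕ) + 1 = (i : ℕ) then 1
          else if (j : ℕ) = m+1 - 1 then -(dd R (m+1) (((i.rev):ℕ)+1))
          else 0) =
        Matrix.of (fun i j : Fin (m+1) => bent (dd R (m+1)) (m+1) (i:ℕ) (j:ℕ) +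
          (if (i:ℕ) = 0 then Polynomial.C (dd R (m+1) ((j:ℕ)+1)) else 0)) := by
      refine Matrix.ext fun i j => ?_
      rw [Matrix.charmatrix_apply, Matrix.diagonal_apply, Matrix.of_apply, Matrix.of_apply]
      have hrev : ((i.rev : ℕ)+1) = m+1-(i:ℕ) := by
        rw [Fin.val_rev]
        omega
      rw [hrev]
      simp only [Nat.add_sub_cancel, Fin.ext_iff]
      exact entry_eq (dd R (m+1)) m (i:ℕ) (j:ℕ) (by omega) (by omega)
    rw [hmat, detA (dd R (m+1)) m]
    have hkey := keySum (dd R (m+1)) (m+1)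
    rw [Finset.sum_congr rfl (fun k (hk : k ∈ Finset.range (m+1)) => by
        rw [show m+1-1-k = m-k from by omega] :
        ∀ k ∈ Finset.range (m+1),
          Polynomial.C (dd R (m+1) (k+1)) * qp (dd R (m+1)) (m+1-1-k)
            = Polynomial.C (dd R (m+1) (k+1)) * qp (dd R (m+1)) (m-k))] at hkey
    rw [hkey]
    congr 1
    rw [← Fin.sum_univ_eq_sum_range
      (fun j => Polynomial.C (esq (dd R (m+1)) j) * Polynomial.X ^ (m+1-1-j)) (m+1)]
    refine Finset.sum_congr rfl fun i _ => ?_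
    have hesqX : esq (dd R (m+1)) (i:ℕ) = MvPolynomial.X i := by
      rw [esq, dd, dif_pos (⟨by omega, by omega⟩ : 1 ≤ (i:ℕ)+1 ∧ (i:ℕ)+1 ≤ m+1)]
      simp only [Nat.add_sub_cancel, Fin.eta]
      rw [Finset.sum_attach ((Finset.Ico 1 ((i:ℕ)+1)))
        (fun k => dd R (m+1) k * dd R (m+1) ((i:ℕ)+1-k))]
      rw [Finset.sum_Ico_eq_sum_range
        (fun k => dd R (m+1) k * dd R (m+1) ((i:ℕ)+1-k)) 1 ((i:ℕ)+1)]
      simp only [Nat.add_sub_cancel]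
      rw [Finset.sum_congr rfl (fun k (hk : k ∈ Finset.range (i:ℕ)) => by
          rw [show (1:ℕ)+k = k+1 from by omega, show (i:ℕ)+1-(k+1) = (i:ℕ)-k from by omega] :
          ∀ k ∈ Finset.range (i:ℕ),
            dd R (m+1) (1+k) * dd R (m+1) ((i:ℕ)+1-(1+k))
              = dd R (m+1) (k+1) * dd R (m+1) ((i:ℕ)-k))]
      have h2 : (2 : MvPolynomial (Fin (m+1)) R) * MvPolynomial.C (⅟(2:R)) = 1 := by
        rw [show (2 : MvPolynomial (Fin (m+1)) R) = MvPolynomial.C 2 from (map_ofNat _ 2).symm,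
          ← map_mul, mul_invOf_self, map_one]
      set S := ∑ k ∈ Finset.range (i:ℕ), dd R (m+1) (k+1) * dd R (m+1) ((i:ℕ)-k) with hS
      calc 2 * (MvPolynomial.C (⅟(2:R)) * (MvPolynomial.X i - S)) + S
          = (2 * MvPolynomial.C (⅟(2:R))) * (MvPolynomial.X i - S) + S := by ring
        _ = MvPolynomial.X i := by rw [h2]; ring
    rw [hesqX]
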